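/- arXiv:1309.5587 — 8 statements merged into one kernel-verified Lean document; each statement's English description precedes it below -/
import Mathlib

section
/- Let H = [I | A] be a parity-check matrix in standard form of a binary linear code of length n, dimension k, and minimum distance greater than 2, where I is the (n−k)×(n−k) identity. Then H is an incidence matrix of a pairwise balanced design of index 1 if and only if A is an incidence matrix of a pairwise balanced design of index 1 containing no block of size 1. -/
/-- `M` is an incidence matrix of a pairwise balanced design of index 1:
every column is nonempty (blocks are nonempty sets of points), and every pair
of distinct points (rows) lies in exactly one common block (column). -/
def IsPBDIncidence {m n : Type} [Fintype m] [Fintype n]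
    (M : Matrix m n (ZMod 2)) : Prop :=
  (∀ j, ∃ i, M i j = 1) ∧ ∀ i i' : m, i ≠ i' → ∃! j, M i j = 1 ∧ M i' j = 1

/-- Let H = [I | A] be a parity-check matrix in standard form of a binary linear code of
length n, dimension k, and minimum distance greater than 2 (no zero column, no two equal
columns). Then H is an incidence matrix of a pairwise balanced design of index 1 iff
A is an incidence matrix of a pairwise balanced design of index 1 with no block of size 1. -/
theorem stmt_2 (r k : ℕ) (A : Matrix (Fin r) (Fin k) (ZMod 2))
    (H : Matrix (Fin r) (Fin r ⊕ Fin k) (ZMod 2))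
    (hH : H = Matrix.fromCols 1 A)
    (hnz : ∀ j, ∃ i, H i j = 1)
    (hdist : ∀ j j', (∀ i, H i j = H i j') → j = j') :
    IsPBDIncidence H ↔
      (IsPBDIncidence A ∧ ∀ j, (Finset.univ.filter fun i => A i j = 1).card ≠ 1) := by
  subst hH
  have hzo : ∀ x : ZMod 2, x = 0 ∨ x = 1 := by decide
  have hid : ∀ i a : Fin r,
      Matrix.fromCols 1 A i (Sum.inl a) = 1 ↔ i = a := by
    intro i a
    simp [Matrix.fromCols_apply_inl, Matrix.one_apply]

  have hA : ∀ i (j : Fin k),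
      Matrix.fromCols (1 : Matrix (Fin r) (Fin r) (ZMod 2)) A i (Sum.inr j) = A i j := by
    intro i j; rw [Matrix.fromCols_apply_inr]
  have card1 : ∀ j, (Finset.univ.filter fun i => A i j = 1).card ≠ 1 := by
    intro j hc
    obtain ⟨i, hi⟩ := Finset.card_eq_one.mp hc
    have hmem : ∀ i' : Fin r, A i' j = 1 ↔ i' = i := by
      intro i'
      have := Finset.ext_iff.mp hi i'
      simpa using this
    have : (Sum.inl i : Fin r ⊕ Fin k) = Sum.inr j := by
      apply hdist
      intro i'
      rw [hA]
      by_cases h : i' = i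
      · subst h
        rw [(hid i' i').mpr rfl, (hmem i').mpr rfl]
      · rcases hzo (A i' j) with h0 | h1
        · rw [h0]
          rcases hzo (Matrix.fromCols 1 A i' (Sum.inl i)) with h0' | h1'
          · exact h0'
          · exact absurd ((hid i' i).mp h1') h
        · exact absurd ((hmem i').mp h1) h
    simp at this
  constructor
  · rintro ⟨-, hpair⟩
    refine ⟨⟨?_, ?_⟩, card1⟩
    · intro j
      obtain ⟨i, hi⟩ := hnz (Sum.inr j)
      exact ⟨i, by rwa [hA] at hi⟩
    · intro i i' hne
      obtain ⟨j0, ⟨h1, h2⟩, hu⟩ := hpair i i' hne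
      rcases j0 with a | j
      · exact absurd (((hid i a).mp h1).trans ((hid i' a).mp h2).symm) hne
      · refine ⟨j, ⟨by rwa [hA] at h1, by rwa [hA] at h2⟩, ?_⟩
        intro j' ⟨hj1, hj2⟩
        have := hu (Sum.inr j') ⟨by rwa [hA], by rwa [hA]⟩
        exact Sum.inr.inj this
  · rintro ⟨⟨-, hpair⟩, -⟩
    refine ⟨hnz, ?_⟩
    intro i i' hne
    obtain ⟨j, ⟨h1, h2⟩, hu⟩ := hpair i i' hne
    refine ⟨Sum.inr j, ⟨by rwa [hA], by rwa [hA]⟩, ?_⟩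
    rintro (a | j') ⟨hj1, hj2⟩
    · exact absurd (((hid i a).mp hj1).trans ((hid i' a).mp hj2).symm) hne
    · exact congrArg Sum.inr (hu j' ⟨by rwa [hA] at hj1, by rwa [hA] at hj2⟩)
end

section
/- Let A be an (n−k)×k incidence matrix of a nontrivial PBD(n−k, K, 1) with 1 ∉ K, and let H = [I | A]. Then the Tanner graph of H has girth exactly 6, i.e., H contains no 2×2 all-one submatrix but does contain three columns inducing a 6-cycle. -/
/-- Let A be an (n−k)×k incidence matrix of a nontrivial PBD(n−k,K,1) with 1 ∉ K
(every block has at least 2 points, every pair of points in exactly one block, more than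
one block), and let H = [I | A]. Then the Tanner graph of H has girth exactly 6:
H contains no 2×2 all-one submatrix, but contains three rows and three columns
inducing a 6-cycle. -/
theorem stmt_3 (r k : ℕ) (hk : 2 ≤ k) (A : Matrix (Fin r) (Fin k) (ZMod 2))
    (hcolw : ∀ j, 2 ≤ (Finset.univ.filter fun i => A i j = 1).card)
    (hpair : ∀ i i' : Fin r, i ≠ i' → ∃! j, A i j = 1 ∧ A i' j = 1)
    (H : Matrix (Fin r) (Fin r ⊕ Fin k) (ZMod 2))
    (hH : H = Matrix.fromCols 1 A) :
    (¬ ∃ (i₁ i₂ : Fin r) (j₁ j₂ : Fin r ⊕ Fin k), i₁ ≠ i₂ ∧ j₁ ≠ j₂ ∧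
        H i₁ j₁ = 1 ∧ H i₁ j₂ = 1 ∧ H i₂ j₁ = 1 ∧ H i₂ j₂ = 1) ∧
    (∃ (i₁ i₂ i₃ : Fin r) (j₁ j₂ j₃ : Fin r ⊕ Fin k),
        [i₁, i₂, i₃].Pairwise (· ≠ ·) ∧ [j₁, j₂, j₃].Pairwise (· ≠ ·) ∧
        H i₁ j₁ = 1 ∧ H i₂ j₁ = 1 ∧ H i₂ j₂ = 1 ∧
        H i₃ j₂ = 1 ∧ H i₃ j₃ = 1 ∧ H i₁ j₃ = 1) := by
  subst hH
  constructor
  · rintro ⟨i₁, i₂, j₁, j₂, hi, hj, h11, h12, h21, h22⟩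
    cases j₁ with
    | inl a =>
      simp [Matrix.fromCols_apply_inl, Matrix.one_apply] at h11 h21
      exact hi (h11.trans h21.symm)
    | inr b =>
      cases j₂ with
      | inl a =>
        simp [Matrix.fromCols_apply_inl, Matrix.one_apply] at h12 h22
        exact hi (h12.trans h22.symm)
      | inr b' =>
        simp [Matrix.fromCols_apply_inr] at h11 h12 h21 h22
        obtain ⟨j, -, huniq⟩ := hpair i₁ i₂ hi
        have hb := huniq b ⟨h11, h21⟩
        have hb' := huniq b' ⟨h12, h22⟩
        exact hj (by rw [hb.trans hb'.symm])
  · -- find two distinct columns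
    have hj12 : (⟨0, by omega⟩ : Fin k) ≠ ⟨1, by omega⟩ := by
      intro h; exact absurd (congrArg Fin.val h) (by simp)
    set c₁ : Fin k := ⟨0, by omega⟩
    set c₂ : Fin k := ⟨1, by omega⟩
    obtain ⟨a, ha, b, hb, hab⟩ := Finset.one_lt_card.mp (hcolw c₁)
    simp only [Finset.mem_filter, Finset.mem_univ, true_and] at ha hb
    obtain ⟨c, hc, d, hd, hcd⟩ := Finset.one_lt_card.mp (hcolw c₂)
    simp only [Finset.mem_filter, Finset.mem_univ, true_and] at hc hd
    -- some point of block c₂ is not in block c₁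
    have hex : ∃ e, A e c₂ = 1 ∧ A e c₁ ≠ 1 := by
      by_contra hcon
      push_neg at hcon
      obtain ⟨j, -, huniq⟩ := hpair c d hcd
      have h1 := huniq c₁ ⟨hcon c hc, hcon d hd⟩
      have h2 := huniq c₂ ⟨hc, hd⟩
      exact hj12 (h1.trans h2.symm)
    obtain ⟨e, he₂, he₁⟩ := hex
    have hea : e ≠ a := fun h => he₁ (h ▸ ha)
    have heb : e ≠ b := fun h => he₁ (h ▸ hb)
    obtain ⟨jae, ⟨haae, haee⟩, -⟩ := hpair a e (Ne.symm hea)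
    obtain ⟨jbe, ⟨hbbe, hbee⟩, -⟩ := hpair b e (Ne.symm heb)
    have h1ae : c₁ ≠ jae := fun h => he₁ (h ▸ haee)
    have h1be : c₁ ≠ jbe := fun h => he₁ (h ▸ hbee)
    have haebe : jae ≠ jbe := by
      intro h
      obtain ⟨j, -, huniq⟩ := hpair a b hab
      have h1 := huniq c₁ ⟨ha, hb⟩
      have h2 := huniq jae ⟨haae, h ▸ hbbe⟩
      exact h1ae (h1.trans h2.symm)
    refine ⟨a, b, e, Sum.inr c₁, Sum.inr jbe, Sum.inr jae, ?_, ?_, ?_, ?_, ?_, ?_, ?_, ?_⟩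
    · simp [hab, hea.symm, heb.symm]
    · simp [h1ae, h1be, haebe.symm]
    all_goals simp [Matrix.fromCols_apply_inr, ha, hb, hbbe, hbee, haee, haae]
end

section
/- Let A be an (n−k)×k incidence matrix of a nontrivial PBD(n−k,K,1) with 1 ∉ K, and let H = [I | A]. Then the binary linear code with parity-check matrix H has minimum distance exactly 1 + min{μ : μ ∈ K}. -/
open Finset

private lemma zmod2_ne_zero : ∀ a : ZMod 2, a ≠ 0 ↔ a = 1 := by decide

private lemma zmod2_ne_one : ∀ a : ZMod 2, a ≠ 1 ↔ a = 0 := by decide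

private lemma zmod2_add_self : ∀ a : ZMod 2, a + a = 0 := by decide

private lemma zmod2_add_eq_zero : ∀ a b : ZMod 2, a + b = 0 → a = b := by decide

/-- Let A be an (n−k)×k incidence matrix of a nontrivial PBD(n−k,K,1) with 1 ∉ K,
and let H = [I | A]. Then the binary linear code with parity-check matrix H has
minimum distance exactly 1 + min{μ : μ ∈ K}, where min{μ : μ ∈ K} is the smallest
column weight `μmin` of A. The minimum distance is the least Hamming weight of a
nonzero vector in the kernel of H. -/
theorem stmt_4 (r k : ℕ) (hk : 2 ≤ k) (A : Matrix (Fin r) (Fin k) (ZMod 2))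
    (hcolw : ∀ j, 2 ≤ (Finset.univ.filter fun i => A i j = 1).card)
    (hpair : ∀ i i' : Fin r, i ≠ i' → ∃! j, A i j = 1 ∧ A i' j = 1)
    (μmin : ℕ)
    (hmin : ∀ j, μmin ≤ (Finset.univ.filter fun i => A i j = 1).card)
    (hex : ∃ j, (Finset.univ.filter fun i => A i j = 1).card = μmin)
    (H : Matrix (Fin r) (Fin r ⊕ Fin k) (ZMod 2))
    (hH : H = Matrix.fromCols 1 A) :
    IsLeast {w : ℕ | ∃ x : (Fin r ⊕ Fin k) → ZMod 2, x ≠ 0 ∧ H.mulVec x = 0 ∧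
      w = (Finset.univ.filter fun j => x j ≠ 0).card} (1 + μmin) := by
  classical
  subst hH
  have wt : ∀ x : (Fin r ⊕ Fin k) → ZMod 2,
      (univ.filter fun j => x j ≠ 0).card
        = (univ.filter fun i => x (Sum.inl i) ≠ 0).card
          + (univ.filter fun j => x (Sum.inr j) ≠ 0).card := by
    intro x
    rw [Finset.card_filter, Finset.card_filter, Finset.card_filter, Fintype.sum_sum_type]
  constructor
  · -- membership
    obtain ⟨j₀, hj₀⟩ := hex
    set u : Fin r → ZMod 2 := fun i => A i j₀ with hu
    set v : Fin k → ZMod 2 := fun j => if j = j₀ then 1 else 0 with hv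
    refine ⟨Sum.elim u v, ?_, ?_, ?_⟩
    · intro h
      have := congrFun h (Sum.inr j₀)
      simp [hv] at this
    · rw [Matrix.fromCols_mulVec_sumElim, Matrix.one_mulVec]
      funext i
      have hAv : A.mulVec v i = A i j₀ := by
        simp [Matrix.mulVec, dotProduct, hv, mul_ite, mul_one, mul_zero]
      simp only [Pi.add_apply, hAv, Pi.zero_apply, hu]
      exact zmod2_add_self _
    · rw [wt]
      have h1 : (univ.filter fun i => Sum.elim u v (Sum.inl i) ≠ 0)
          = univ.filter fun i => A i j₀ = 1 := by
        apply filter_congr; intro i _; simp [hu, zmod2_ne_zero]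
      have h2 : (univ.filter fun j => Sum.elim u v (Sum.inr j) ≠ 0) = {j₀} := by
        ext j
        simp only [mem_filter, mem_univ, true_and, mem_singleton, Sum.elim_inr, hv]
        by_cases h : j = j₀ <;> simp [h]
      rw [h1, h2, hj₀, card_singleton, add_comm]
  · -- lower bound
    rintro w ⟨x, hx0, hker, rfl⟩
    set u : Fin r → ZMod 2 := fun i => x (Sum.inl i) with hud
    set v : Fin k → ZMod 2 := fun j => x (Sum.inr j) with hvd
    have hx : x = Sum.elim u v := funext fun l => by cases l <;> rfl
    rw [hx, Matrix.fromCols_mulVec_sumElim, Matrix.one_mulVec] at hker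
    have hu : ∀ i, u i = ∑ j, A i j * v j := by
      intro i
      have := congrFun hker i
      simp only [Pi.add_apply, Pi.zero_apply] at this
      exact (zmod2_add_eq_zero _ _ this).trans rfl
    have hv : ∃ j, v j ≠ 0 := by
      by_contra h
      push_neg at h
      apply hx0
      funext l
      cases l with
      | inr j => exact h j
      | inl i => show u i = 0; rw [hu i]; simp [h]
    obtain ⟨j₀, hj₀⟩ := hv
    set S : Finset (Fin k) := univ.filter fun j => v j ≠ 0 with hSdef
    set B : Finset (Fin r) := univ.filter fun i => A i j₀ = 1 with hBdef
    set T : Finset (Fin r) := B.filter fun i => ∃ j', v j' ≠ 0 ∧ j' ≠ j₀ ∧ A i j' = 1 with hTdef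
    have hj₀S : j₀ ∈ S := by simp [hSdef, hj₀]
    -- injection from T into S.erase j₀
    have hT : T.card + 1 ≤ S.card := by
      have hinj : T.card ≤ (S.erase j₀).card := by
        apply Finset.card_le_card_of_injOn
          (fun i => if h : ∃ j', v j' ≠ 0 ∧ j' ≠ j₀ ∧ A i j' = 1 then h.choose else j₀)
        · intro i hi
          have hiT := (mem_filter.mp hi).2
          simp only [Finset.mem_coe]
          rw [dif_pos hiT]
          obtain ⟨h1, h2, h3⟩ := hiT.choose_spec
          simp [Finset.mem_erase, h2, hSdef, h1]
        · intro i₁ hi₁ i₂ hi₂ hfe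
          by_contra hne
          simp only [Finset.mem_coe] at hi₁ hi₂
          have h₁ := (mem_filter.mp hi₁).2
          have h₂ := (mem_filter.mp hi₂).2
          simp only at hfe
          rw [dif_pos h₁, dif_pos h₂] at hfe
          obtain ⟨_, hne₁, hA₁⟩ := h₁.choose_spec
          obtain ⟨_, _, hA₂⟩ := h₂.choose_spec
          rw [hfe] at hA₁ hne₁
          have hB₁ : A i₁ j₀ = 1 := (mem_filter.mp (mem_filter.mp hi₁).1).2
          have hB₂ : A i₂ j₀ = 1 := (mem_filter.mp (mem_filter.mp hi₂).1).2
          obtain ⟨j, _, huniq⟩ := hpair i₁ i₂ hne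
          exact hne₁ ((huniq _ ⟨hA₁, hA₂⟩).trans (huniq _ ⟨hB₁, hB₂⟩).symm)
      have := Finset.card_erase_of_mem hj₀S
      have : 1 ≤ S.card := Finset.card_pos.mpr ⟨j₀, hj₀S⟩
      omega
    -- every point of B \ T has u i = 1
    have hBT : ∀ i ∈ B, i ∉ T → u i ≠ 0 := by
      intro i hiB hiT
      have hsum : ∑ j, A i j * v j = A i j₀ * v j₀ := by
        apply Finset.sum_eq_single_of_mem j₀ (mem_univ _)
        intro j _ hjne
        by_cases hvj : v j = 0
        · rw [hvj, mul_zero]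
        · have : A i j = 0 := by
            by_contra hAij
            exact hiT (mem_filter.mpr ⟨hiB, ⟨j, hvj, hjne, (zmod2_ne_zero _).mp hAij⟩⟩)
          rw [this, zero_mul]
      have hAij₀ : A i j₀ = 1 := (mem_filter.mp hiB).2
      rw [hu i, hsum, hAij₀, one_mul]
      exact hj₀
    have hsub : B \ T ⊆ univ.filter fun i => u i ≠ 0 := by
      intro i hi
      obtain ⟨hiB, hiT⟩ := Finset.mem_sdiff.mp hi
      exact mem_filter.mpr ⟨mem_univ _, hBT i hiB hiT⟩
    have hTB : T ⊆ B := Finset.filter_subset _ _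
    have hcard : (B \ T).card + T.card = B.card := Finset.card_sdiff_add_card_eq_card hTB
    have hBμ : μmin ≤ B.card := hmin j₀
    have hle : (B \ T).card ≤ (univ.filter fun i => u i ≠ 0).card := Finset.card_le_card hsub
    rw [wt]
    have hSe : (univ.filter fun j => x (Sum.inr j) ≠ 0) = S := rfl
    have hUe : (univ.filter fun i => x (Sum.inl i) ≠ 0) = (univ.filter fun i => u i ≠ 0) := rfl
    rw [hSe, hUe]
    omega
end

section
/- Every Steiner 2-design S(2,μ,v) is μ-even-free: no nonempty set of at most μ blocks forms an even configuration. -/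
/-- Every Steiner 2-design S(2,μ,v) is μ-even-free: no nonempty set of at most μ blocks
forms an even configuration (a configuration in which every point lies in an even number
of its blocks). -/
theorem stmt_9 (V : Type) [Fintype V] [DecidableEq V] (μ : ℕ)
    (B : Finset (Finset V))
    (hsize : ∀ b ∈ B, b.card = μ)
    (hpair : ∀ p q : V, p ≠ q → ∃! b, b ∈ B ∧ p ∈ b ∧ q ∈ b) :
    ∀ C ⊆ B, C.Nonempty → C.card ≤ μ →
      ∃ p : V, ¬ Even ((C.filter fun b => p ∈ b).card) := by
  intro C hCB hne hcard
  by_contra h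
  push_neg at h
  obtain ⟨b, hb⟩ := hne
  have key : ∀ p ∈ b, ∃ b' ∈ C.erase b, p ∈ b' := by
    intro p hp
    have hev := h p
    have hb1 : b ∈ C.filter fun c => p ∈ c := Finset.mem_filter.2 ⟨hb, hp⟩
    have h2 : 1 < (C.filter fun c => p ∈ c).card := by
      rcases hev with ⟨k, hk⟩
      have : 0 < (C.filter fun c => p ∈ c).card := Finset.card_pos.2 ⟨b, hb1⟩
      omega
    obtain ⟨b', hb', hne'⟩ := Finset.exists_mem_ne h2 b
    exact ⟨b', Finset.mem_erase.2 ⟨hne', (Finset.mem_filter.1 hb').1⟩,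
      (Finset.mem_filter.1 hb').2⟩
  choose f hf1 hf2 using key
  have hle : b.attach.card ≤ (C.erase b).card := by
    apply Finset.card_le_card_of_injOn (fun p => f p.1 p.2)
    · intro p _
      exact hf1 p.1 p.2
    · intro p _ q _ heq
      simp only at heq
      by_contra hpq
      have hpq' : p.1 ≠ q.1 := fun hh => hpq (Subtype.ext hh)
      have hfp := hf1 p.1 p.2
      have hfq := hf2 q.1 q.2
      have hfpC : f p.1 p.2 ∈ C := Finset.mem_of_mem_erase hfp
      have huniq := (hpair p.1 q.1 hpq').unique
        ⟨hCB hfpC, hf2 p.1 p.2, heq ▸ hfq⟩ ⟨hCB hb, p.2, q.2⟩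
      exact (Finset.mem_erase.1 hfp).1 huniq
  rw [Finset.card_attach, Finset.card_erase_of_mem hb, hsize b (hCB hb)] at hle
  have h1 : 1 ≤ C.card := Finset.card_pos.2 ⟨b, hb⟩
  omega
end

section
/- If μ is odd, then every r-even-free Steiner 2-design S(2,μ,v) with r even is also (r+1)-even-free. -/
/-- A Steiner 2-design is `r`-even-free if it has no nonempty even configuration of size
at most `r`. -/
def EvenFree {V : Type} [DecidableEq V] (B : Finset (Finset V)) (r : ℕ) : Prop :=
  ∀ C ⊆ B, C.Nonempty → C.card ≤ r → ∃ p : V, ¬ Even ((C.filter fun b => p ∈ b).card)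

/-- If μ is odd, then every r-even-free Steiner 2-design S(2,μ,v) with r even is also
(r+1)-even-free. -/
theorem stmt_10 (V : Type) [Fintype V] [DecidableEq V] (μ r : ℕ)
    (hμ : Odd μ) (hr : Even r)
    (B : Finset (Finset V))
    (hsize : ∀ b ∈ B, b.card = μ)
    (hpair : ∀ p q : V, p ≠ q → ∃! b, b ∈ B ∧ p ∈ b ∧ q ∈ b)
    (hef : EvenFree B r) :
    EvenFree B (r + 1) := by
  intro C hCB hCne hCcard
  rcases le_or_gt C.card r with h | h
  · exact hef C hCB hCne h
  -- C.card = r + 1, odd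
  have hcard : C.card = r + 1 := le_antisymm hCcard h
  by_contra hall
  push_neg at hall
  -- double counting
  have key : ∑ p : V, (C.filter fun b => p ∈ b).card = ∑ b ∈ C, b.card := by
    simp_rw [Finset.card_filter, Finset.card_eq_sum_ones]
    rw [Finset.sum_comm]
    refine Finset.sum_congr rfl fun b _ => ?_
    simp [Finset.sum_ite_mem]
  have hL : Even (∑ p : V, (C.filter fun b => p ∈ b).card) :=
    Finset.even_sum _ fun p _ => hall p
  have hR : ¬ Even (∑ b ∈ C, b.card) := by
    have : ∑ b ∈ C, b.card = μ * C.card := by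
      rw [Finset.sum_congr rfl fun b hb => hsize b (hCB hb), Finset.sum_const, smul_eq_mul,
        mul_comm]
    rw [this, hcard]
    have hodd : Odd (r + 1) := Even.add_one hr
    simpa [Nat.even_mul, Nat.not_even_iff_odd] using ⟨hμ, hodd⟩
  rw [key] at hL
  exact hR hL
end

section
/- Let (V,B) be an r-even-free S(2,μ,v) such that every nonempty configuration C ⊆ B with |C| ≤ r and odd(C) even satisfies |C| + odd(C) ≥ r+1, where odd(C) is the number of points lying in an odd number of blocks of C. Then the PBD(v+1,K,1) obtained by adjoining a new point ∞ and all blocks {∞,x} for x ∈ V is r-even-free. -/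
/-- `oddPts C` is the number of points lying in an odd number of blocks of `C`. -/
def oddPts {V : Type} [Fintype V] [DecidableEq V] (C : Finset (Finset V)) : ℕ :=
  (Finset.univ.filter fun p : V => ¬ Even ((C.filter fun b => p ∈ b).card)).card

/-- Let (V,B) be an r-even-free S(2,μ,v) such that every nonempty configuration C ⊆ B with
|C| ≤ r and odd(C) even satisfies |C| + odd(C) ≥ r+1. Then the PBD(v+1,K,1) obtained by
adjoining a new point ∞ and all blocks {∞,x} for x ∈ V is r-even-free. -/
theorem stmt_14 (V : Type) [Fintype V] [DecidableEq V] (μ r : ℕ)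
    (B : Finset (Finset V))
    (hsize : ∀ b ∈ B, b.card = μ)
    (hpair : ∀ p q : V, p ≠ q → ∃! b, b ∈ B ∧ p ∈ b ∧ q ∈ b)
    (hef : EvenFree B r)
    (hcond : ∀ C ⊆ B, C.Nonempty → C.card ≤ r → Even (oddPts C) →
      r + 1 ≤ C.card + oddPts C) :
    EvenFree
      ((B.image fun b => b.image (some : V → Option V)) ∪
        (Finset.univ.image fun x : V => ({none, some x} : Finset (Option V)))) r := by
  classical
  intro D hD hne hcard
  by_contra hcon
  push_neg at hcon
  have hinj : Function.Injective (fun b : Finset V => b.image (some : V → Option V)) :=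
    Finset.image_injective (Option.some_injective V)
  -- every block of D containing none is a pair {none, some x}
  have hpairform : ∀ d ∈ D, (none : Option V) ∈ d → ∃ x : V, d = {none, some x} := by
    intro d hd hnd
    have := hD hd
    rw [Finset.mem_union] at this
    rcases this with hmem | hmem
    · rcases Finset.mem_image.mp hmem with ⟨b, _, rfl⟩
      exfalso
      rcases Finset.mem_image.mp hnd with ⟨y, _, hy⟩
      exact Option.some_ne_none _ hy
    · rcases Finset.mem_image.mp hmem with ⟨x, _, rfl⟩
      exact ⟨x, rfl⟩
  set C : Finset (Finset V) := B.filter (fun b => b.image some ∈ D) with hCdef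
  have hCB : C ⊆ B := Finset.filter_subset _ _
  set D1 : Finset (Finset (Option V)) := D.filter (fun d => (none : Option V) ∉ d) with hD1def
  set D2 : Finset (Finset (Option V)) := D.filter (fun d => (none : Option V) ∈ d) with hD2def
  have hD1eq : D1 = C.image (fun b => b.image some) := by
    ext d
    simp only [hD1def, Finset.mem_filter, Finset.mem_image, hCdef]
    constructor
    · rintro ⟨hd, hnd⟩
      have := hD hd
      rw [Finset.mem_union] at this
      rcases this with hmem | hmem
      · rcases Finset.mem_image.mp hmem with ⟨b, hb, rfl⟩
        exact ⟨b, ⟨hb, hd⟩, rfl⟩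
      · rcases Finset.mem_image.mp hmem with ⟨x, _, rfl⟩
        exact absurd (by simp) hnd
    · rintro ⟨b, ⟨hb, hbd⟩, rfl⟩
      refine ⟨hbd, ?_⟩
      simp
  have hcard1 : D1.card = C.card := by
    rw [hD1eq, Finset.card_image_of_injective _ hinj]
  -- point counts for points of the form some p
  have hptcount : ∀ p : V,
      (D.filter (fun d => some p ∈ d)).card
        = (C.filter (fun b => p ∈ b)).card
          + (if ({none, some p} : Finset (Option V)) ∈ D then 1 else 0) := by
    intro p
    have hsplit : (D.filter (fun d => some p ∈ d)).card
        = (D1.filter (fun d => some p ∈ d)).card + (D2.filter (fun d => some p ∈ d)).card := by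
      rw [hD1def, hD2def, Finset.filter_comm, Finset.filter_comm (fun d => (none : Option V) ∈ d)]
      have h := Finset.card_filter_add_card_filter_not
        (p := fun d => (none : Option V) ∉ d) (s := D.filter (fun d => some p ∈ d))
      simp only [not_not] at h
      omega
    rw [hsplit]
    congr 1
    · have : D1.filter (fun d => some p ∈ d)
          = (C.filter (fun b => p ∈ b)).image (fun b => b.image some) := by
        rw [hD1eq]
        ext d
        simp only [Finset.mem_filter, Finset.mem_image]
        constructor
        · rintro ⟨⟨b, hb, rfl⟩, hpd⟩
          exact ⟨b, ⟨hb, by simpa using hpd⟩, rfl⟩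
        · rintro ⟨b, ⟨hb, hpb⟩, rfl⟩
          exact ⟨⟨b, hb, rfl⟩, by simp [hpb]⟩
      rw [this, Finset.card_image_of_injective _ hinj]
    · have : D2.filter (fun d => some p ∈ d)
          = if ({none, some p} : Finset (Option V)) ∈ D then {({none, some p} : Finset (Option V))} else ∅ := by
        ext d
        simp only [hD2def, Finset.mem_filter]
        constructor
        · rintro ⟨⟨hd, hnd⟩, hpd⟩
          rcases hpairform d hd hnd with ⟨x, rfl⟩
          have : x = p := by
            rcases Finset.mem_insert.mp hpd with h | h
            · exact absurd h (by simp)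
            · simpa using (Finset.mem_singleton.mp h).symm
          subst this
          simp [hd]
        · intro hd
          split at hd
          · rename_i hin
            rw [Finset.mem_singleton] at hd
            subst hd
            exact ⟨⟨hin, by simp⟩, by simp⟩
          · simp at hd
      rw [this]
      split <;> simp
  -- membership of pairs in D is equivalent to oddness of the point in C
  have hkey : ∀ p : V, (({none, some p} : Finset (Option V)) ∈ D)
      ↔ ¬ Even ((C.filter (fun b => p ∈ b)).card) := by
    intro p
    have he := hcon (some p)
    rw [hptcount p] at he
    constructor
    · intro hin hev
      rw [if_pos hin] at he
      rw [Nat.even_add_one] at he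
      exact he hev
    · intro hodd
      by_contra hnin
      rw [if_neg hnin, Nat.add_zero] at he
      exact hodd he
  -- D2 is the image of the odd points
  have hD2eq : D2 = (Finset.univ.filter fun p : V =>
      ¬ Even ((C.filter fun b => p ∈ b).card)).image
      (fun x => ({none, some x} : Finset (Option V))) := by
    ext d
    simp only [hD2def, Finset.mem_filter, Finset.mem_image, Finset.mem_univ, true_and]
    constructor
    · rintro ⟨hd, hnd⟩
      rcases hpairform d hd hnd with ⟨x, rfl⟩
      exact ⟨x, (hkey x).mp hd, rfl⟩
    · rintro ⟨x, hx, rfl⟩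
      exact ⟨(hkey x).mpr hx, by simp⟩
  have hpinj : Function.Injective (fun x : V => ({none, some x} : Finset (Option V))) := by
    intro x y hxy
    have h2 : ({none, some x} : Finset (Option V)) = {none, some y} := hxy
    have : (some x : Option V) ∈ ({none, some y} : Finset (Option V)) := by
      rw [← h2]; simp
    simpa using this
  have hcard2 : D2.card = oddPts C := by
    rw [hD2eq, Finset.card_image_of_injective _ hpinj, oddPts]
  have hDsplit : D.card = C.card + oddPts C := by
    rw [← hcard1, ← hcard2, hD1def, hD2def]
    have h := Finset.card_filter_add_card_filter_not
      (p := fun d => (none : Option V) ∉ d) (s := D)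
    simp only [not_not] at h
    omega
  -- from evenness at none: oddPts C is even
  have hnone := hcon none
  have hD2filter : D.filter (fun d => (none : Option V) ∈ d) = D2 := rfl
  rw [hD2filter, hcard2] at hnone
  -- case split on C
  rcases Finset.eq_empty_or_nonempty C with hCe | hCne
  · have hodd0 : oddPts C = 0 := by
      simp [oddPts, hCe]
    have hc0 : C.card = 0 := by rw [hCe]; rfl
    have hpos := Finset.card_pos.mpr hne
    omega
  · have h1 : C.card ≤ r := le_trans (by rw [hDsplit]; omega) hcard
    have := hcond C hCB hCne h1 hnone
    omega
end

section
/- Let H be an incidence matrix of the unique S(2,3,9) (the affine plane AG(2,3)), and let H' be the 10×21 matrix [I | H] with an appended bottom row (1,…,1 | 0,…,0). Then no sum of an even number of rows of H' has Hamming weight 6. -/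
open Finset

set_option maxHeartbeats 1000000

private lemma zmod2_cases (x : ZMod 2) : x = 0 ∨ x = 1 := by revert x; decide

private lemma card_pair_eq_one {H : Matrix (Fin 9) (Fin 12) (ZMod 2)}
    (hpair : ∀ i i' : Fin 9, i ≠ i' → ∃! j, H i j = 1 ∧ H i' j = 1)
    {i i' : Fin 9} (h : i ≠ i') :
    (univ.filter fun j => H i j = 1 ∧ H i' j = 1).card = 1 := by
  obtain ⟨j₀, hj₀, huniq⟩ := hpair i i' h
  rw [Finset.card_eq_one]
  refine ⟨j₀, ?_⟩
  ext j
  simp only [mem_filter, mem_univ, true_and, mem_singleton]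
  exact ⟨fun hj => huniq j hj, fun hj => hj ▸ hj₀⟩

private lemma rowweight {H : Matrix (Fin 9) (Fin 12) (ZMod 2)}
    (hcolw : ∀ j, (Finset.univ.filter fun i => H i j = 1).card = 3)
    (hpair : ∀ i i' : Fin 9, i ≠ i' → ∃! j, H i j = 1 ∧ H i' j = 1)
    (i : Fin 9) : (univ.filter fun j => H i j = 1).card = 4 := by
  have h1 : ∑ i' ∈ univ.erase i, (univ.filter fun j => H i j = 1 ∧ H i' j = 1).card = 8 := by
    rw [Finset.sum_congr rfl fun i' hi' =>
      card_pair_eq_one hpair (Ne.symm (Finset.ne_of_mem_erase hi'))]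
    simp [Finset.card_erase_of_mem]
  have h2 : ∑ i' ∈ univ.erase i, (univ.filter fun j => H i j = 1 ∧ H i' j = 1).card
      = 2 * (univ.filter fun j => H i j = 1).card := by
    simp only [Finset.card_filter]
    rw [Finset.sum_comm]
    rw [Finset.mul_sum]
    refine Finset.sum_congr rfl fun j _ => ?_
    by_cases hij : H i j = 1
    · simp only [hij, true_and, mul_ite, mul_one, mul_zero]
      have : ∑ i' ∈ univ.erase i, (if H i' j = 1 then 1 else 0)
          = ((univ.erase i).filter fun i' => H i' j = 1).card := (Finset.card_filter _ _).symm
      rw [this, Finset.filter_erase, Finset.card_erase_of_mem (by simp [hij]), hcolw j]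
      simp
    · simp [hij]
  omega

private lemma sum_c {H : Matrix (Fin 9) (Fin 12) (ZMod 2)}
    (hcolw : ∀ j, (Finset.univ.filter fun i => H i j = 1).card = 3)
    (hpair : ∀ i i' : Fin 9, i ≠ i' → ∃! j, H i j = 1 ∧ H i' j = 1)
    (T : Finset (Fin 9)) :
    ∑ k : Fin 12, (T.filter fun a => H a k = 1).card = 4 * T.card := by
  simp only [Finset.card_filter]
  rw [Finset.sum_comm]
  have : ∀ a ∈ T, ∑ k : Fin 12, (if H a k = 1 then 1 else 0) = 4 := by
    intro a _
    rw [← Finset.card_filter]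
    exact rowweight hcolw hpair a
  rw [Finset.sum_congr rfl this, Finset.sum_const, smul_eq_mul, mul_comm]

private lemma sum_c_sq {H : Matrix (Fin 9) (Fin 12) (ZMod 2)}
    (hcolw : ∀ j, (Finset.univ.filter fun i => H i j = 1).card = 3)
    (hpair : ∀ i i' : Fin 9, i ≠ i' → ∃! j, H i j = 1 ∧ H i' j = 1)
    (T : Finset (Fin 9)) :
    ∑ k : Fin 12, ((T.filter fun a => H a k = 1).card) * ((T.filter fun a => H a k = 1).card)
      = T.card * T.card + 3 * T.card := by
  have step1 : ∀ k : Fin 12,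
      ((T.filter fun a => H a k = 1).card) * ((T.filter fun a => H a k = 1).card)
      = ∑ a ∈ T, ∑ b ∈ T, (if H a k = 1 ∧ H b k = 1 then 1 else 0) := by
    intro k
    rw [Finset.card_filter, Finset.sum_mul_sum]
    refine Finset.sum_congr rfl fun a _ => Finset.sum_congr rfl fun b _ => ?_
    by_cases h1 : H a k = 1 <;> by_cases h2 : H b k = 1 <;> simp [h1, h2]
  rw [Finset.sum_congr rfl fun k _ => step1 k, Finset.sum_comm]
  have step2 : ∀ a ∈ T, ∑ k : Fin 12, ∑ b ∈ T, (if H a k = 1 ∧ H b k = 1 then 1 else 0)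
      = T.card + 3 := by
    intro a ha
    rw [Finset.sum_comm]
    have inner : ∀ b ∈ T, ∑ k : Fin 12, (if H a k = 1 ∧ H b k = 1 then 1 else 0)
        = if a = b then 4 else 1 := by
      intro b _
      rw [← Finset.card_filter]
      by_cases hab : a = b
      · subst hab
        simp only [and_self, if_true]
        simpa using rowweight hcolw hpair a
      · rw [if_neg hab]
        exact card_pair_eq_one hpair hab
    rw [Finset.sum_congr rfl inner]
    have : ∀ b : Fin 9, (if a = b then (4:ℕ) else 1) = 1 + (if a = b then 3 else 0) := by
      intro b; by_cases h : a = b <;> simp [h]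
    rw [Finset.sum_congr rfl fun b _ => this b, Finset.sum_add_distrib, Finset.sum_const,
      Finset.sum_ite_eq T a fun _ => (3:ℕ), if_pos ha]
    simp
  rw [Finset.sum_congr rfl step2, Finset.sum_const, smul_eq_mul]
  ring

private lemma pointwise (c : ℕ) (hc : c ≤ 3) :
    c * c + c % 2 = 2 * c + 4 * (if c = 3 then 1 else 0) := by
  interval_cases c <;> simp

private lemma core (t W N3 : ℕ) (ht : t ≤ 9) (h : t * t + 3 * t + W = 8 * t + 4 * N3) :
    (Even t → t + W ≠ 6) ∧ (¬ Even t → 9 - t + W ≠ 6) := by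
  interval_cases t <;> constructor <;> intro _ <;> omega



/-- Let H be an incidence matrix of the unique S(2,3,9) (the affine plane AG(2,3)): a
9×12 binary matrix whose columns have weight 3 and in which every pair of distinct rows
shares exactly one common support column. Let H' be the 10×21 matrix [I | H] with an
appended bottom row (1,…,1 | 0,…,0). Then no sum of an even number of rows of H' has
Hamming weight 6. -/
theorem stmt_17 (H : Matrix (Fin 9) (Fin 12) (ZMod 2))
    (hcolw : ∀ j, (Finset.univ.filter fun i => H i j = 1).card = 3)
    (hpair : ∀ i i' : Fin 9, i ≠ i' → ∃! j, H i j = 1 ∧ H i' j = 1)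
    (H' : Matrix (Fin 9 ⊕ Unit) (Fin 9 ⊕ Fin 12) (ZMod 2))
    (hH' : H' = Matrix.fromBlocks 1 H (Matrix.of fun _ _ => 1) 0) :
    ∀ S : Finset (Fin 9 ⊕ Unit), Even S.card →
      (Finset.univ.filter fun j => (∑ i ∈ S, H' i j) ≠ 0).card ≠ 6 := by

  subst hH'
  intro S hS
  classical
  set T : Finset (Fin 9) := univ.filter (fun a => Sum.inl a ∈ S) with hT
  set t := T.card with htdef
  set c : Fin 12 → ℕ := fun k => (T.filter fun a => H a k = 1).card with hc
  set W := (univ.filter fun k : Fin 12 => c k % 2 = 1).card with hWdef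
  set N3 := (univ.filter fun k : Fin 12 => c k = 3).card with hN3def
  -- cardinality of S
  have hScard : S.card = t + (if Sum.inr () ∈ S then 1 else 0) := by
    have h0 : S = univ.filter (· ∈ S) := by simp
    rw [h0, Finset.card_filter, Fintype.sum_sum_type]
    congr 1
    · rw [htdef, hT, Finset.card_filter]
    · by_cases h : Sum.inr () ∈ S <;> simp [h]
  -- generic sum split
  have hswap : ∀ f : (Fin 9 ⊕ Unit) → ZMod 2, ∑ i ∈ S, f i =
      (∑ a : Fin 9, if Sum.inl a ∈ S then f (Sum.inl a) else 0)
        + (if Sum.inr () ∈ S then f (Sum.inr ()) else 0) := by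
    intro f
    rw [← Finset.univ_inter S, ← Finset.sum_ite_mem, Fintype.sum_sum_type]
    simp
  -- left columns
  have hL : ∀ j : Fin 9,
      (∑ i ∈ S, (Matrix.fromBlocks 1 H (Matrix.of fun _ _ => 1) 0) i (Sum.inl j)) =
      (if Sum.inl j ∈ S then 1 else 0) + (if Sum.inr () ∈ S then 1 else 0) := by
    intro j
    rw [hswap]
    congr 1
    · simp only [Matrix.fromBlocks_apply₁₁, Matrix.one_apply]
      have h1 : ∀ a : Fin 9,
          (if Sum.inl a ∈ S then (if a = j then (1:ZMod 2) else 0) else 0)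
          = (if a = j then (if Sum.inl j ∈ S then 1 else 0) else 0) := by
        intro a; by_cases h : a = j
        · subst h; simp
        · simp [h]
      rw [Finset.sum_congr rfl fun a _ => h1 a, Finset.sum_ite_eq' univ j]
      simp
  -- right columns
  have hR : ∀ k : Fin 12,
      (∑ i ∈ S, (Matrix.fromBlocks (1 : Matrix (Fin 9) (Fin 9) (ZMod 2)) H
        (Matrix.of fun _ _ => 1) (0 : Matrix Unit (Fin 12) (ZMod 2))) i (Sum.inr k)) =
      ((c k : ℕ) : ZMod 2) := by
    intro k
    rw [hswap]
    simp only [Matrix.fromBlocks_apply₁₂, Matrix.fromBlocks_apply₂₂, Matrix.zero_apply,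
      ite_self, add_zero]
    have hcast : ((c k : ℕ) : ZMod 2)
        = ∑ a : Fin 9, (if Sum.inl a ∈ S ∧ H a k = 1 then (1:ZMod 2) else 0) := by
      have hck2 : c k = ∑ a : Fin 9, (if Sum.inl a ∈ S ∧ H a k = 1 then (1:ℕ) else 0) := by
        rw [hc]
        simp only
        rw [hT, Finset.filter_filter, Finset.card_filter]
      rw [hck2, Nat.cast_sum]
      refine Finset.sum_congr rfl fun a _ => ?_
      split <;> simp
    rw [hcast]
    refine Finset.sum_congr rfl fun a _ => ?_
    by_cases h1 : Sum.inl a ∈ S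
    · rcases zmod2_cases (H a k) with h | h <;> simp [h1, h]
    · simp [h1]
  -- total weight splits
  have hwt : (univ.filter fun j : Fin 9 ⊕ Fin 12 => (∑ i ∈ S,
        (Matrix.fromBlocks (1 : Matrix (Fin 9) (Fin 9) (ZMod 2)) H
          (Matrix.of fun _ _ => 1) (0 : Matrix Unit (Fin 12) (ZMod 2))) i j) ≠ 0).card
      = (univ.filter fun j : Fin 9 => ¬((Sum.inl j ∈ S) ↔ (Sum.inr () ∈ S))).card + W := by
    rw [Finset.card_filter, Fintype.sum_sum_type]
    congr 1
    · rw [Finset.card_filter]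
      refine Finset.sum_congr rfl fun j _ => ?_
      rw [hL j]
      by_cases h1 : Sum.inl j ∈ S <;> by_cases h2 : Sum.inr () ∈ S <;>
        simp [h1, h2] <;> decide
    · rw [hWdef, Finset.card_filter]
      refine Finset.sum_congr rfl fun k _ => ?_
      have heq : (((c k : ℕ) : ZMod 2) ≠ 0) ↔ (c k % 2 = 1) := by
        rw [Ne, ZMod.natCast_eq_zero_iff]
        omega
      rw [hR k]
      by_cases h : c k % 2 = 1
      · rw [if_pos (heq.mpr h), if_pos h]
      · rw [if_neg (fun hh => h (heq.mp hh)), if_neg h]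
  -- counting facts
  have ht9 : t ≤ 9 := le_trans (Finset.card_le_univ T) (by simp)
  have hck : ∀ k, c k ≤ 3 := fun k =>
    le_trans (Finset.card_le_card (Finset.filter_subset_filter _ (Finset.subset_univ T)))
      (le_of_eq (hcolw k))
  have hsum1 : ∑ k : Fin 12, c k = 4 * t := sum_c hcolw hpair T
  have hsum2 : ∑ k : Fin 12, c k * c k = t * t + 3 * t := sum_c_sq hcolw hpair T
  have hW2 : W = ∑ k : Fin 12, c k % 2 := by
    rw [hWdef, Finset.card_filter]
    refine Finset.sum_congr rfl fun k _ => ?_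
    by_cases h : c k % 2 = 1
    · simp [h]
    · simp only [h, if_false]
      omega
  have hkey : t * t + 3 * t + W = 8 * t + 4 * N3 := by
    have hpt : ∑ k : Fin 12, (c k * c k + c k % 2)
        = ∑ k : Fin 12, (2 * c k + 4 * (if c k = 3 then 1 else 0)) :=
      Finset.sum_congr rfl fun k _ => pointwise (c k) (hck k)
    rw [Finset.sum_add_distrib, Finset.sum_add_distrib, ← Finset.mul_sum, ← Finset.mul_sum,
      hsum1, hsum2, ← hW2] at hpt
    have hn3 : ∑ k : Fin 12, (if c k = 3 then (1:ℕ) else 0) = N3 :=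
      (Finset.card_filter _ _).symm
    rw [hn3] at hpt
    omega
  obtain ⟨hcore1, hcore2⟩ := core t W N3 ht9 hkey
  rw [hwt]
  by_cases hb : Sum.inr () ∈ S
  · have hfc : (univ.filter fun j : Fin 9 => ¬((Sum.inl j ∈ S) ↔ (Sum.inr () ∈ S)))
        = univ.filter fun j : Fin 9 => ¬(Sum.inl j ∈ S) :=
      Finset.filter_congr (by simp [hb])
    have hcompl := Finset.card_filter_add_card_filter_not
      (s := (univ : Finset (Fin 9))) (p := fun j : Fin 9 => Sum.inl j ∈ S)
    have hcu : (univ : Finset (Fin 9)).card = 9 := by simp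
    have hodd : ¬ Even t := by
      rw [hScard, if_pos hb] at hS
      rcases Nat.even_add_one.mp hS with h
      exact h
    have := hcore2 hodd
    rw [hfc]
    have : (univ.filter fun j : Fin 9 => ¬(Sum.inl j ∈ S)).card = 9 - t := by
      rw [htdef, hT] at *
      omega
    rw [this]
    exact hcore2 hodd
  · have hfc : (univ.filter fun j : Fin 9 => ¬((Sum.inl j ∈ S) ↔ (Sum.inr () ∈ S)))
        = univ.filter fun j : Fin 9 => Sum.inl j ∈ S :=
      Finset.filter_congr (by simp [hb])
    have heven : Even t := by
      rw [hScard, if_neg hb, add_zero] at hS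
      exact hS
    rw [hfc, ← hT, ← htdef]
    exact hcore1 heven
end

section
/- If an abelian group acts transitively on the points of a nontrivial r-even-free Steiner 2-design S(2,μ,v) with v > μ(μ−1)+1, then r ≤ 2μ−1. -/
section Aux

variable {V : Type} {G : Type} [CommGroup G] [MulAction G V]

lemma sigma_comm (σ : V → G) (o : V) (hσ : ∀ x, σ x • o = x) (x y : V) :
    σ x • y = σ y • x := by
  calc σ x • y = σ x • (σ y • o) := by rw [hσ y]
    _ = (σ x * σ y) • o := (mul_smul _ _ _).symm
    _ = (σ y * σ x) • o := by rw [mul_comm]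
    _ = σ y • (σ x • o) := mul_smul _ _ _
    _ = σ y • x := by rw [hσ x]

lemma smul_eq_sigma_smul (σ : V → G) (o : V) (hσ : ∀ x, σ x • o = x) (g : G) (z : V) :
    g • z = σ (g • o) • z := by
  calc g • z = g • (σ z • o) := by rw [hσ z]
    _ = (g * σ z) • o := (mul_smul _ _ _).symm
    _ = (σ z * g) • o := by rw [mul_comm]
    _ = σ z • (g • o) := mul_smul _ _ _
    _ = σ (g • o) • z := sigma_comm σ o hσ z (g • o)

end Aux

/-- If an abelian group acts transitively on the points of a nontrivial r-even-free
Steiner 2-design S(2,μ,v) with v > μ(μ−1)+1, then r ≤ 2μ−1. -/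
theorem stmt_19 (V : Type) [Fintype V] [DecidableEq V] (μ v r : ℕ)
    (B : Finset (Finset V)) (hv : Fintype.card V = v)
    (hsize : ∀ b ∈ B, b.card = μ)
    (hpair : ∀ p q : V, p ≠ q → ∃! b, b ∈ B ∧ p ∈ b ∧ q ∈ b)
    (hnontriv : B.Nonempty ∧ ∀ b ∈ B, b ≠ Finset.univ)
    (hv2 : μ * (μ - 1) + 1 < v)
    (G : Type) [CommGroup G] [MulAction G V]
    (htrans : MulAction.IsPretransitive G V)
    (haut : ∀ g : G, ∀ b ∈ B, b.image (fun x => g • x) ∈ B)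
    (hef : EvenFree B r) :
    r ≤ 2 * μ - 1 := by
  classical
  haveI := htrans
  by_contra hr
  push_neg at hr
  -- basic numerology
  have hvge2 : 2 ≤ v := by omega
  have hVcard : 1 < Fintype.card V := by omega
  obtain ⟨p0, q0, hpq0⟩ := Fintype.exists_pair_of_one_lt_card hVcard
  have hμ2 : 2 ≤ μ := by
    obtain ⟨b, ⟨hbB, hpb, hqb⟩, -⟩ := hpair p0 q0 hpq0
    have : 1 < b.card := Finset.one_lt_card.mpr ⟨p0, hpb, q0, hqb, hpq0⟩
    rw [hsize b hbB] at this; omega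
  have hrge : 2 * μ ≤ r := by omega
  haveI : Nonempty V := Fintype.card_pos_iff.mp (by omega)
  -- the "translation" machinery
  obtain ⟨o⟩ := ‹Nonempty V›
  obtain ⟨σ, hσ⟩ : ∃ σ : V → G, ∀ x, σ x • o = x :=
    ⟨fun x => Classical.choose (MulAction.exists_smul_eq G o x),
     fun x => Classical.choose_spec (MulAction.exists_smul_eq G o x)⟩
  set act : G → Finset V → Finset V := fun g b => b.image (fun x => g • x) with hact
  have act_mem : ∀ (g : G) (b : Finset V) (x : V), x ∈ b → g • x ∈ act g b := by
    intro g b x hx; exact Finset.mem_image_of_mem _ hx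
  have act_act : ∀ (g h : G) (b : Finset V), act g (act h b) = act (g * h) b := by
    intro g h b
    simp only [hact, Finset.image_image]
    congr 1
    funext x
    simp [mul_smul]
  have act_one : ∀ b : Finset V, act (1 : G) b = b := by
    intro b; simp [hact]
  have act_inv : ∀ (g : G) (b : Finset V), act g⁻¹ (act g b) = b := by
    intro g b; rw [act_act, inv_mul_cancel, act_one]
  have act_B : ∀ (g : G), ∀ b ∈ B, act g b ∈ B := fun g b hb => haut g b hb
  have act_card : ∀ (g : G) (b : Finset V), (act g b).card = b.card := by
    intro g b; exact Finset.card_image_of_injective _ (MulAction.injective g)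
  have act_sigma : ∀ (g : G) (b : Finset V), act g b = act (σ (g • o)) b := by
    intro g b
    simp only [hact]
    apply Finset.image_congr
    intro x _
    exact smul_eq_sigma_smul σ o hσ g x
  -- counting blocks : B.card > v
  have hBcard : v < B.card := by
    have hunion : (Finset.univ : Finset V).offDiag = B.biUnion (fun b => b.offDiag) := by
      ext x
      simp only [Finset.mem_offDiag, Finset.mem_biUnion, Finset.mem_univ, true_and]
      constructor
      · intro hne
        obtain ⟨b, ⟨hbB, h1, h2⟩, -⟩ := hpair x.1 x.2 hne
        exact ⟨b, hbB, h1, h2, hne⟩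
      · rintro ⟨b, -, -, -, hne⟩; exact hne
    have hdisj : ∀ b ∈ B, ∀ c ∈ B, b ≠ c → Disjoint b.offDiag c.offDiag := by
      intro b hb c hc hbc
      rw [Finset.disjoint_left]
      rintro ⟨x, y⟩ hxb hxc
      rw [Finset.mem_offDiag] at hxb hxc
      obtain ⟨hb1, hb2, hne⟩ := hxb
      obtain ⟨hc1, hc2, -⟩ := hxc
      obtain ⟨u, -, huniq⟩ := hpair x y hne
      exact hbc ((huniq b ⟨hb, hb1, hb2⟩).trans (huniq c ⟨hc, hc1, hc2⟩).symm)
    have hcards : v * v - v = B.card * (μ * μ - μ) := by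
      have h1 : (Finset.univ : Finset V).offDiag.card = v * v - v := by
        rw [Finset.offDiag_card]; simp [hv]
      rw [hunion, Finset.card_biUnion hdisj] at h1
      have h2 : ∑ b ∈ B, (b.offDiag).card = ∑ b ∈ B, (μ * μ - μ) :=
        Finset.sum_congr rfl (fun b hb => by rw [Finset.offDiag_card, hsize b hb])
      rw [h2, Finset.sum_const, smul_eq_mul] at h1
      exact h1.symm
    by_contra hcon
    push_neg at hcon
    have h1 : μ ≤ μ * μ := Nat.le_mul_of_pos_left μ (by omega)
    have h2 : v ≤ v * v := Nat.le_mul_of_pos_left v (by omega)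
    have h3 : 1 ≤ μ := by omega
    zify [h1, h2, h3] at hcards hv2
    have hc : (B.card : ℤ) ≤ v := by exact_mod_cast hcon
    have hv2' : (2 : ℤ) ≤ v := by exact_mod_cast hvge2
    nlinarith [mul_le_mul_of_nonneg_right hc (show (0:ℤ) ≤ (μ:ℤ) * μ - μ by nlinarith),
      mul_lt_mul_of_pos_left (show (μ:ℤ) * μ - μ < (v:ℤ) - 1 by nlinarith) (show (0:ℤ) < (v:ℤ) by linarith)]
  -- pick two blocks in different orbits
  obtain ⟨ℓ, hℓB⟩ := hnontriv.1
  set orb : Finset (Finset V) := Finset.univ.image (fun x : V => act (σ x) ℓ) with horb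
  have orb_mem : ∀ g : G, act g ℓ ∈ orb := by
    intro g
    rw [act_sigma g ℓ]
    exact Finset.mem_image_of_mem _ (Finset.mem_univ _)
  have horbcard : orb.card ≤ v := le_trans (Finset.card_image_le) (by simp [hv])
  obtain ⟨m, hmB, hm_orb⟩ : ∃ m ∈ B, m ∉ orb := by
    by_contra hcon
    push_neg at hcon
    have : B ⊆ orb := fun b hb => hcon b hb
    have := Finset.card_le_card this
    omega
  have hℓcard : ℓ.card = μ := hsize ℓ hℓB
  have hmcard : m.card = μ := hsize m hmB
  -- key: no translate of m equals a translate of ℓ (in the σ-form we need)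
  have key_ne : ∀ (g g' : G), act g ℓ ≠ act g' m := by
    intro g g' heq
    apply hm_orb
    have : m = act (g'⁻¹ * g) ℓ := by rw [← act_act, heq, act_inv]
    rw [this]
    exact orb_mem _
  -- the multiset configuration
  set M : Multiset (Finset V) :=
    (m.val.map fun x => act (σ x) ℓ) + (ℓ.val.map fun y => act (σ y) m) with hM
  set C : Finset (Finset V) := M.toFinset.filter (fun b => ¬ Even (M.count b)) with hC
  have hMB : ∀ b ∈ M, b ∈ B := by
    intro b hb
    rw [hM] at hb
    rcases Multiset.mem_add.mp hb with h | h
    · obtain ⟨x, -, rfl⟩ := Multiset.mem_map.mp h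
      exact act_B _ _ hℓB
    · obtain ⟨y, -, rfl⟩ := Multiset.mem_map.mp h
      exact act_B _ _ hmB
  have hCB : C ⊆ B := by
    intro b hb
    rw [hC, Finset.mem_filter] at hb
    exact hMB b (Multiset.mem_toFinset.mp hb.1)
  have hMcard : Multiset.card M = 2 * μ := by
    rw [hM]
    simp [Multiset.card_map, hmcard, hℓcard]
    ring
  have hCcard : C.card ≤ 2 * μ := by
    calc C.card ≤ M.toFinset.card := Finset.card_le_card (Finset.filter_subset _ _)
      _ ≤ Multiset.card M := Multiset.toFinset_card_le M
      _ = 2 * μ := hMcard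
  -- nonempty : the block act (σ y₀) m has multiplicity exactly 1
  have comm_smul : ∀ (a b : G) (w : V), a • b • w = b • a • w := by
    intro a b w; rw [smul_smul, mul_comm, ← smul_smul]
  have hℓne : ℓ.Nonempty := by rw [← Finset.card_pos, hℓcard]; omega
  have hmne : m.Nonempty := by rw [← Finset.card_pos, hmcard]; omega
  obtain ⟨y₀, hy₀⟩ := hℓne
  obtain ⟨z, hz⟩ := hmne
  have hCne : C.Nonempty := by
    refine ⟨act (σ y₀) m, ?_⟩
    have hmem : act (σ y₀) m ∈ M := by
      rw [hM]
      exact Multiset.mem_add.mpr (Or.inr (Multiset.mem_map.mpr ⟨y₀, Finset.mem_val.mpr hy₀, rfl⟩))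
    have hc1 : Multiset.count (act (σ y₀) m) (m.val.map fun x => act (σ x) ℓ) = 0 := by
      rw [Multiset.count_eq_zero]
      intro hmem'
      obtain ⟨x, -, heq⟩ := Multiset.mem_map.mp hmem'
      exact key_ne (σ x) (σ y₀) heq
    have huniq : ∀ y ∈ ℓ, act (σ y) m = act (σ y₀) m → y = y₀ := by
      intro y hy heq
      by_contra hne
      have hk : act ((σ y₀)⁻¹ * σ y) m = m := by rw [← act_act, heq, act_inv]
      have hzo : (σ z)⁻¹ • z = o := inv_smul_eq_iff.mpr (hσ z).symm
      have hgz : (σ y₀ * (σ z)⁻¹) • z = y₀ := by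
        rw [mul_smul, hzo]; exact hσ y₀
      have hy₀b : y₀ ∈ act (σ y₀ * (σ z)⁻¹) m := by
        have := act_mem (σ y₀ * (σ z)⁻¹) m z hz
        rwa [hgz] at this
      have hyb : y ∈ act (σ y₀ * (σ z)⁻¹) m := by
        have hz' : ((σ y₀)⁻¹ * σ y) • z ∈ m := by
          have := act_mem ((σ y₀)⁻¹ * σ y) m z hz
          rwa [hk] at this
        have hcomp : (σ y₀ * (σ z)⁻¹) • (((σ y₀)⁻¹ * σ y) • z) = y := by
          rw [comm_smul, hgz, mul_smul, sigma_comm σ o hσ y y₀, inv_smul_smul]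
        have := act_mem (σ y₀ * (σ z)⁻¹) m _ hz'
        rwa [hcomp] at this
      obtain ⟨u, -, huni⟩ := hpair y y₀ hne
      have h4 : act (σ y₀ * (σ z)⁻¹) m = ℓ :=
        (huni _ ⟨act_B _ m hmB, hyb, hy₀b⟩).trans (huni ℓ ⟨hℓB, hy, hy₀⟩).symm
      exact key_ne 1 (σ y₀ * (σ z)⁻¹) (by rw [act_one]; exact h4.symm)
    have hc2 : Multiset.count (act (σ y₀) m) (ℓ.val.map fun y => act (σ y) m) = 1 := by
      rw [Multiset.count_map]
      have hfe : Multiset.filter (fun y => act (σ y₀) m = act (σ y) m) ℓ.val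
          = (ℓ.filter (fun y => act (σ y₀) m = act (σ y) m)).val := by
        rw [Finset.filter_val]
      rw [hfe]
      have : ℓ.filter (fun y => act (σ y₀) m = act (σ y) m) = {y₀} := by
        apply Finset.eq_singleton_iff_unique_mem.mpr
        constructor
        · exact Finset.mem_filter.mpr ⟨hy₀, rfl⟩
        · intro y hy
          rw [Finset.mem_filter] at hy
          exact huniq y hy.1 hy.2.symm
      rw [this]
      rfl
    have hcnt : M.count (act (σ y₀) m) = 1 := by
      rw [hM, Multiset.count_add, hc1, hc2]
    refine Finset.mem_filter.mpr ⟨Multiset.mem_toFinset.mpr hmem, ?_⟩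
    rw [hcnt]
    decide
  -- even at every point
  have hCeven : ∀ q : V, Even ((C.filter fun b => q ∈ b).card) := by
    intro q
    set pairs : Finset (V × V) := (m ×ˢ ℓ).filter (fun t => σ t.1 • t.2 = q) with hpairs
    have hc1 : Multiset.card (Multiset.filter (fun b => q ∈ b) (m.val.map fun x => act (σ x) ℓ))
        = pairs.card := by
      rw [Multiset.filter_map, Multiset.card_map]
      have hconv : Multiset.filter ((fun b => q ∈ b) ∘ (fun x => act (σ x) ℓ)) m.val
          = (m.filter (fun x => q ∈ act (σ x) ℓ)).val := by
        rw [Finset.filter_val]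
        rfl
      rw [hconv]
      show (m.filter (fun x => q ∈ act (σ x) ℓ)).card = pairs.card
      apply Finset.card_bij (fun x _ => (x, (σ x)⁻¹ • q))
      · intro x hx
        rw [Finset.mem_filter] at hx
        obtain ⟨hxm, hq⟩ := hx
        obtain ⟨y, hyℓ, hyq⟩ := Finset.mem_image.mp hq
        refine Finset.mem_filter.mpr ⟨Finset.mem_product.mpr ⟨hxm, ?_⟩, ?_⟩
        · rw [← hyq, inv_smul_smul]; exact hyℓ
        · exact smul_inv_smul _ _
      · intro a₁ h₁ a₂ h₂ heq
        exact congrArg Prod.fst heq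
      · intro t ht
        rw [hpairs, Finset.mem_filter, Finset.mem_product] at ht
        obtain ⟨⟨h1, h2⟩, h3⟩ := ht
        refine ⟨t.1, Finset.mem_filter.mpr ⟨h1, Finset.mem_image.mpr ⟨t.2, h2, h3⟩⟩, ?_⟩
        have h4 : (σ t.1)⁻¹ • q = t.2 := by rw [← h3, inv_smul_smul]
        exact Prod.ext rfl h4
    have hc2 : Multiset.card (Multiset.filter (fun b => q ∈ b) (ℓ.val.map fun y => act (σ y) m))
        = pairs.card := by
      rw [Multiset.filter_map, Multiset.card_map]
      have hconv : Multiset.filter ((fun b => q ∈ b) ∘ (fun y => act (σ y) m)) ℓ.val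
          = (ℓ.filter (fun y => q ∈ act (σ y) m)).val := by
        rw [Finset.filter_val]
        rfl
      rw [hconv]
      show (ℓ.filter (fun y => q ∈ act (σ y) m)).card = pairs.card
      apply Finset.card_bij (fun y _ => ((σ y)⁻¹ • q, y))
      · intro y hy
        rw [Finset.mem_filter] at hy
        obtain ⟨hyl, hq⟩ := hy
        obtain ⟨x, hxm, hxq⟩ := Finset.mem_image.mp hq
        have hx' : (σ y)⁻¹ • q = x := by rw [← hxq, inv_smul_smul]
        refine Finset.mem_filter.mpr ⟨Finset.mem_product.mpr ⟨?_, hyl⟩, ?_⟩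
        · rw [hx']; exact hxm
        · show σ ((σ y)⁻¹ • q) • y = q
          rw [hx', sigma_comm σ o hσ x y]
          exact hxq
      · intro a₁ h₁ a₂ h₂ heq
        exact congrArg Prod.snd heq
      · intro t ht
        rw [hpairs, Finset.mem_filter, Finset.mem_product] at ht
        obtain ⟨⟨h1, h2⟩, h3⟩ := ht
        have hq : q ∈ act (σ t.2) m := by
          refine Finset.mem_image.mpr ⟨t.1, h1, ?_⟩
          rw [sigma_comm σ o hσ t.2 t.1]
          exact h3
        refine ⟨t.2, Finset.mem_filter.mpr ⟨h2, hq⟩, ?_⟩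
        have h4 : (σ t.2)⁻¹ • q = t.1 := by
          rw [← h3, sigma_comm σ o hσ t.1 t.2, inv_smul_smul]
        exact Prod.ext h4 rfl
    have hMfilt : Multiset.card (M.filter fun b => q ∈ b) = 2 * pairs.card := by
      rw [hM, Multiset.filter_add, Multiset.card_add, hc1, hc2]
      ring
    -- parity transfer from the multiset to the set C
    have hMside : Multiset.card (M.filter fun b => q ∈ b)
        = ∑ b ∈ M.toFinset, (if q ∈ b then M.count b else 0) := by
      have hsub : (M.filter fun b => q ∈ b).toFinset ⊆ M.toFinset := by
        intro b hb
        exact Multiset.mem_toFinset.mpr (Multiset.mem_of_mem_filter (Multiset.mem_toFinset.mp hb))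
      have e1 : ∑ b ∈ (M.filter fun b => q ∈ b).toFinset,
            Multiset.count b (M.filter fun b => q ∈ b)
          = ∑ b ∈ M.toFinset, Multiset.count b (M.filter fun b => q ∈ b) := by
        apply Finset.sum_subset hsub
        intro b _ hbn
        exact Multiset.count_eq_zero.mpr (fun hmem => hbn (Multiset.mem_toFinset.mpr hmem))
      calc Multiset.card (M.filter fun b => q ∈ b)
          = ∑ b ∈ (M.filter fun b => q ∈ b).toFinset,
              Multiset.count b (M.filter fun b => q ∈ b) :=
            (Multiset.toFinset_sum_count_eq _).symm
        _ = ∑ b ∈ M.toFinset, Multiset.count b (M.filter fun b => q ∈ b) := e1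
        _ = ∑ b ∈ M.toFinset, (if q ∈ b then M.count b else 0) :=
            Finset.sum_congr rfl (fun b _ => Multiset.count_filter)
    have hCside : (C.filter fun b => q ∈ b).card
        = ∑ b ∈ M.toFinset, (if (¬ Even (M.count b) ∧ q ∈ b) then 1 else 0) := by
      rw [hC, Finset.filter_filter, Finset.card_filter]
    have hmod : (C.filter fun b => q ∈ b).card % 2
        = Multiset.card (M.filter fun b => q ∈ b) % 2 := by
      rw [hMside, hCside, Finset.sum_nat_mod, Finset.sum_nat_mod M.toFinset 2
        (fun b => if q ∈ b then M.count b else 0)]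
      congr 1
      apply Finset.sum_congr rfl
      intro b _
      by_cases hqb : q ∈ b
      · by_cases he : Even (M.count b)
        · have := Nat.even_iff.mp he
          simp [hqb, he, this]
        · have := Nat.odd_iff.mp (Nat.not_even_iff_odd.mp he)
          simp [hqb, he, this]
      · simp [hqb]
    rw [Nat.even_iff, hmod, hMfilt]
    omega
  obtain ⟨p, hp⟩ := hef C hCB hCne (le_trans hCcard hrge)
  exact hp (hCeven p)
end
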